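/- arXiv:1712.07182 — 2 statements merged into one kernel-verified Lean document; each statement's English description precedes it below -/
import Mathlib

section
/- Let \mathcal{A} be the set of block-diagonal 4×4 matrices with two identical 2×2 blocks H of determinant absolute value 1 (acting on (x_1,x_3) and (x_2,x_4) as columns of a 2×2 matrix X). Then inf_{A ∈ \mathcal{A}} ‖A[x]‖² = 2|x_1 x_4 − x_2 x_3| for any x = (x_1,x_2,x_3,x_4) ∈ \mathbb{C}^4. -/
open Matrix

/-- Squared Euclidean (Hermitian) norm of a vector in ℂ^k. -/
noncomputable def vnormSq {k : ℕ} (v : Fin k → ℂ) : ℝ := ∑ i, ‖v i‖ ^ 2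

/-- The block-diagonal 4×4 matrix with two identical 2×2 blocks H. -/
def blockDiag2 (H : Matrix (Fin 2) (Fin 2) ℂ) : Matrix (Fin 4) (Fin 4) ℂ :=
  !![H 0 0, H 0 1, 0, 0;
     H 1 0, H 1 1, 0, 0;
     0, 0, H 0 0, H 0 1;
     0, 0, H 1 0, H 1 1]

section Aux

lemma eval_vnormSq (H : Matrix (Fin 2) (Fin 2) ℂ) (x : Fin 4 → ℂ) :
    vnormSq ((blockDiag2 H).mulVec x) =
      ‖H 0 0 * x 0 + H 0 1 * x 1‖ ^ 2 +
      ‖H 1 0 * x 0 + H 1 1 * x 1‖ ^ 2 +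
      ‖H 0 0 * x 2 + H 0 1 * x 3‖ ^ 2 +
      ‖H 1 0 * x 2 + H 1 1 * x 3‖ ^ 2 := by
  simp [vnormSq, blockDiag2, mulVec, dotProduct, Fin.sum_univ_four, Matrix.vecHead,
    Matrix.vecTail]

lemma lower_aux (a b c d x0 x1 x2 x3 : ℂ) (h : ‖a*d - b*c‖ = 1) :
    2 * ‖x0*x3 - x1*x2‖ ≤
      ‖a*x0+b*x1‖^2 + ‖c*x0+d*x1‖^2 +
      ‖a*x2+b*x3‖^2 + ‖c*x2+d*x3‖^2 := by
  have key : (a*x0+b*x1)*(c*x2+d*x3) - (c*x0+d*x1)*(a*x2+b*x3)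
      = (a*d-b*c)*(x0*x3-x1*x2) := by ring
  have h1 : ‖x0*x3-x1*x2‖
      = ‖(a*x0+b*x1)*(c*x2+d*x3) - (c*x0+d*x1)*(a*x2+b*x3)‖ := by
    rw [key, norm_mul, h, one_mul]
  have h2 : ‖(a*x0+b*x1)*(c*x2+d*x3) - (c*x0+d*x1)*(a*x2+b*x3)‖
      ≤ ‖a*x0+b*x1‖ * ‖c*x2+d*x3‖
        + ‖c*x0+d*x1‖ * ‖a*x2+b*x3‖ := by
    calc ‖(a*x0+b*x1)*(c*x2+d*x3) - (c*x0+d*x1)*(a*x2+b*x3)‖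
        ≤ ‖(a*x0+b*x1)*(c*x2+d*x3)‖ + ‖(c*x0+d*x1)*(a*x2+b*x3)‖ :=
          norm_sub_le _ _
      _ = _ := by rw [norm_mul, norm_mul]
  nlinarith [sq_nonneg (‖a*x0+b*x1‖ - ‖c*x2+d*x3‖),
    sq_nonneg (‖c*x0+d*x1‖ - ‖a*x2+b*x3‖), h1, h2]

lemma achiever (x0 x1 x2 x3 : ℂ) (hd : x0*x3 - x1*x2 ≠ 0) :
    ∃ H : Matrix (Fin 2) (Fin 2) ℂ, IsUnit H ∧ ‖H.det‖ = 1 ∧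
      ‖H 0 0 * x0 + H 0 1 * x1‖ ^ 2 +
      ‖H 1 0 * x0 + H 1 1 * x1‖ ^ 2 +
      ‖H 0 0 * x2 + H 0 1 * x3‖ ^ 2 +
      ‖H 1 0 * x2 + H 1 1 * x3‖ ^ 2 = 2 * ‖x0*x3 - x1*x2‖ := by
  set d : ℂ := x0*x3 - x1*x2 with hd_def
  set τ : ℝ := Real.sqrt (‖d‖) with hτ_def
  have hτ0 : 0 ≤ τ := Real.sqrt_nonneg _
  have hτ2 : τ^2 = ‖d‖ := Real.sq_sqrt (norm_nonneg d)
  have habsd : ‖d‖ ≠ 0 := norm_ne_zero_iff.mpr hd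
  have hdet2 : (↑τ/d) * x3 * ((↑τ/d) * x0) - -((↑τ/d) * x2) * -((↑τ/d) * x1)
        = (↑τ:ℝ)^2 / d := by field_simp; ring
  refine ⟨!![(↑τ/d) * x3, -((↑τ/d) * x2); -((↑τ/d) * x1), (↑τ/d) * x0], ?_, ?_, ?_⟩
  · rw [Matrix.isUnit_iff_isUnit_det, Matrix.det_fin_two_of, isUnit_iff_ne_zero, hdet2]
    apply div_ne_zero _ hd
    exact_mod_cast pow_ne_zero 2 (by positivity : (τ:ℝ) ≠ 0)
  · rw [Matrix.det_fin_two_of, hdet2, norm_div, norm_pow, Complex.norm_real, Real.norm_eq_abs,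
      abs_of_nonneg hτ0, hτ2, div_self habsd]
  · have e0 : (↑τ/d) * x3 * x0 + -((↑τ/d) * x2) * x1 = (↑τ:ℂ) := by
      field_simp; ring
    have e1 : -((↑τ/d) * x1) * x0 + (↑τ/d) * x0 * x1 = 0 := by ring
    have e2 : (↑τ/d) * x3 * x2 + -((↑τ/d) * x2) * x3 = 0 := by ring
    have e3 : -((↑τ/d) * x1) * x2 + (↑τ/d) * x0 * x3 = (↑τ:ℂ) := by
      field_simp; ring
    simp only [Matrix.cons_val', Matrix.cons_val_zero, Matrix.cons_val_one, Matrix.head_cons,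
      Matrix.empty_val', Matrix.cons_val_fin_one, Matrix.head_fin_const, Matrix.of_apply]
    rw [e0, e1, e2, e3]
    simp [Complex.norm_real, Real.norm_eq_abs, abs_of_nonneg hτ0]
    rw [hτ2]; ring

open ComplexConjugate in
lemma small_elem (x0 x1 x2 x3 : ℂ) (hd : x0*x3 - x1*x2 = 0) (hu : x0 ≠ 0 ∨ x1 ≠ 0)
    (δ : ℝ) (hδ : 0 < δ) :
    ∃ H : Matrix (Fin 2) (Fin 2) ℂ, IsUnit H ∧ ‖H.det‖ = 1 ∧
      ‖H 0 0 * x0 + H 0 1 * x1‖ ^ 2 +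
      ‖H 1 0 * x0 + H 1 1 * x1‖ ^ 2 +
      ‖H 0 0 * x2 + H 0 1 * x3‖ ^ 2 +
      ‖H 1 0 * x2 + H 1 1 * x3‖ ^ 2 ≤ δ := by
  set r : ℝ := Real.sqrt (‖x0‖ ^ 2 + ‖x1‖ ^ 2) with hr_def
  have hs : 0 < ‖x0‖ ^ 2 + ‖x1‖ ^ 2 := by
    rcases hu with h | h
    · have := norm_pos_iff.mpr h; positivity
    · have := norm_pos_iff.mpr h; positivity
  have hr : 0 < r := Real.sqrt_pos.mpr hs
  have hr2 : r ^ 2 = ‖x0‖ ^ 2 + ‖x1‖ ^ 2 := Real.sq_sqrt hs.le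
  have hrC : (r:ℂ) ≠ 0 := by exact_mod_cast hr.ne'
  set K : ℝ := r ^ 2 + (‖conj x0 * x2 + conj x1 * x3‖) ^ 2 / r ^ 2 with hK_def
  have hK : 0 < K := by positivity
  set ε : ℝ := Real.sqrt (δ / K) with hε_def
  have hε : 0 < ε := Real.sqrt_pos.mpr (by positivity)
  have hε2 : ε ^ 2 = δ / K := Real.sq_sqrt (by positivity)
  have hεC : (ε:ℂ) ≠ 0 := by exact_mod_cast hε.ne'
  have hrr : x0 * conj x0 + x1 * conj x1 = ((r:ℂ) * r) := by
    rw [Complex.mul_conj, Complex.mul_conj]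
    rw [← Complex.sq_norm, ← Complex.sq_norm]
    norm_cast
    rw [← hr2]; ring
  refine ⟨!![-x1/(↑ε*↑r), x0/(↑ε*↑r); ↑ε * conj x0 / ↑r, ↑ε * conj x1 / ↑r], ?_, ?_, ?_⟩
  · rw [Matrix.isUnit_iff_isUnit_det, Matrix.det_fin_two_of, isUnit_iff_ne_zero]
    have : -x1/(↑ε*↑r) * (↑ε * conj x1 / ↑r) - x0/(↑ε*↑r) * (↑ε * conj x0 / ↑r) = -1 := by
      field_simp
      linear_combination (-1:ℂ) * hrr
    rw [this]; norm_num
  · rw [Matrix.det_fin_two_of]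
    have : -x1/(↑ε*↑r) * (↑ε * conj x1 / ↑r) - x0/(↑ε*↑r) * (↑ε * conj x0 / ↑r) = -1 := by
      field_simp
      linear_combination (-1:ℂ) * hrr
    rw [this]; simp
  · have e0 : -x1/(↑ε*↑r) * x0 + x0/(↑ε*↑r) * x1 = 0 := by ring
    have e1 : ↑ε * conj x0 / ↑r * x0 + ↑ε * conj x1 / ↑r * x1 = ((ε*r : ℝ):ℂ) := by
      field_simp
      push_cast; linear_combination (ε:ℂ) * hrr
    have e2 : -x1/(↑ε*↑r) * x2 + x0/(↑ε*↑r) * x3 = 0 := by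
      have : -x1/(↑ε*↑r) * x2 + x0/(↑ε*↑r) * x3 = (x0*x3 - x1*x2)/(↑ε*↑r) := by ring
      rw [this, hd, zero_div]
    have e3 : ↑ε * conj x0 / ↑r * x2 + ↑ε * conj x1 / ↑r * x3
        = (↑ε/↑r) * (conj x0 * x2 + conj x1 * x3) := by ring
    simp only [Matrix.cons_val', Matrix.cons_val_zero, Matrix.cons_val_one, Matrix.head_cons,
      Matrix.empty_val', Matrix.cons_val_fin_one, Matrix.head_fin_const, Matrix.of_apply]
    rw [e0, e1, e2, e3]
    simp only [norm_zero, norm_mul, norm_div, Complex.norm_real, Real.norm_eq_abs]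
    rw [abs_of_nonneg hε.le, abs_of_nonneg hr.le]
    have : 0^2 + (ε*r)^2 + 0^2 + (ε/r * ‖conj x0 * x2 + conj x1 * x3‖)^2
        = ε^2 * K := by rw [hK_def]; field_simp; ring
    rw [this, hε2, div_mul_cancel₀ _ hK.ne']

end Aux

/-- For 𝒜 the set of block-diagonal 4×4 matrices with two identical invertible
2×2 blocks H with |det H| = 1, the reduced norm of x ∈ ℂ⁴ is
inf_{A ∈ 𝒜} ‖A[x]‖² = 2|x₁x₄ − x₂x₃|. -/
theorem reduced_norm_mimo_block (x : Fin 4 → ℂ) :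
    sInf {r : ℝ | ∃ H : Matrix (Fin 2) (Fin 2) ℂ, IsUnit H ∧ ‖H.det‖ = 1 ∧
        r = vnormSq ((blockDiag2 H).mulVec x)}
      = 2 * ‖x 0 * x 3 - x 1 * x 2‖ := by
  set S : Set ℝ := {r : ℝ | ∃ H : Matrix (Fin 2) (Fin 2) ℂ, IsUnit H ∧ ‖H.det‖ = 1 ∧
        r = vnormSq ((blockDiag2 H).mulVec x)} with hS_def
  have hlb : ∀ r ∈ S, 2 * ‖x 0 * x 3 - x 1 * x 2‖ ≤ r := by
    rintro r ⟨H, hH, hdet, rfl⟩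
    rw [eval_vnormSq]
    apply lower_aux
    rw [← Matrix.det_fin_two]
    exact hdet
  have hbdd : BddBelow S := ⟨_, hlb⟩
  have hne : S.Nonempty := ⟨vnormSq ((blockDiag2 1).mulVec x), 1, isUnit_one, by simp, rfl⟩
  refine le_antisymm ?_ (le_csInf hne hlb)
  by_cases hd0 : x 0 * x 3 - x 1 * x 2 = 0
  · rw [hd0, norm_zero, mul_zero]
    have key : ∀ δ : ℝ, 0 < δ → ∃ s ∈ S, s ≤ δ := by
      intro δ hδ
      by_cases h01 : x 0 = 0 ∧ x 1 = 0
      · by_cases h23 : x 2 = 0 ∧ x 3 = 0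
        · refine ⟨vnormSq ((blockDiag2 1).mulVec x), ⟨1, isUnit_one, by simp, rfl⟩, ?_⟩
          rw [eval_vnormSq]
          simp [h01.1, h01.2, h23.1, h23.2]
          positivity
        · obtain ⟨H, h1, h2, h3⟩ := small_elem (x 2) (x 3) (x 0) (x 1)
            (by linear_combination -hd0) (not_and_or.mp h23) δ hδ
          refine ⟨vnormSq ((blockDiag2 H).mulVec x), ⟨H, h1, h2, rfl⟩, ?_⟩
          rw [eval_vnormSq]; linarith
      · obtain ⟨H, h1, h2, h3⟩ := small_elem (x 0) (x 1) (x 2) (x 3)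
          hd0 (not_and_or.mp h01) δ hδ
        refine ⟨vnormSq ((blockDiag2 H).mulVec x), ⟨H, h1, h2, rfl⟩, ?_⟩
        rw [eval_vnormSq]; linarith
    by_contra hpos
    push_neg at hpos
    obtain ⟨s, hsS, hs⟩ := key (sInf S / 2) (by linarith)
    have := csInf_le hbdd hsS
    linarith
  · obtain ⟨H, h1, h2, h3⟩ := achiever (x 0) (x 1) (x 2) (x 3) hd0
    exact csInf_le hbdd ⟨H, h1, h2, by rw [eval_vnormSq, h3]⟩
end

section
/- For a 2×2 complex matrix X, the infimum of the squared Frobenius norm ‖HX‖_F² over all H ∈ GL_2(\mathbb{C}) with |det H| = 1 equals 2|det X|. -/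
open Matrix

lemma frob_lb (M : Matrix (Fin 2) (Fin 2) ℂ) :
    2 * ‖M.det‖ ≤ ∑ i, ∑ j, ‖M i j‖ ^ 2 := by
  rw [Matrix.det_fin_two, Fin.sum_univ_two, Fin.sum_univ_two, Fin.sum_univ_two]
  have h : ‖M 0 0 * M 1 1 - M 0 1 * M 1 0‖
      ≤ ‖M 0 0‖ * ‖M 1 1‖
        + ‖M 0 1‖ * ‖M 1 0‖ := by
    have := norm_add_le (M 0 0 * M 1 1) (-(M 0 1 * M 1 0))
    simpa [sub_eq_add_neg, norm_mul] using this
  nlinarith [sq_nonneg (‖M 0 0‖ - ‖M 1 1‖),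
    sq_nonneg (‖M 0 1‖ - ‖M 1 0‖),
    norm_nonneg (M 0 0), norm_nonneg (M 1 1),
    norm_nonneg (M 0 1), norm_nonneg (M 1 0)]

lemma exists_comb (X : Matrix (Fin 2) (Fin 2) ℂ) (h : X.det = 0) :
    ∃ α β : ℂ, (α ≠ 0 ∨ β ≠ 0) ∧ α * X 0 0 + β * X 1 0 = 0 ∧ α * X 0 1 + β * X 1 1 = 0 := by
  rw [Matrix.det_fin_two] at h
  by_cases ha : X 0 0 ≠ 0
  · refine ⟨X 1 0 / X 0 0, -1, Or.inr (by norm_num), by field_simp; ring, ?_⟩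
    field_simp
    linear_combination -h
  · push_neg at ha
    by_cases hb : X 0 1 ≠ 0
    · have hc : X 1 0 = 0 := by
        have : X 0 1 * X 1 0 = 0 := by rw [ha] at h; linear_combination -h
        rcases mul_eq_zero.mp this with h' | h'
        · exact absurd h' hb
        · exact h'
      refine ⟨X 1 1 / X 0 1, -1, Or.inr (by norm_num), by simp [ha, hc], ?_⟩
      field_simp
      ring
    · push_neg at hb
      exact ⟨1, 0, Or.inl one_ne_zero, by simp [ha], by simp [hb]⟩

/-- For a 2×2 complex matrix X, the infimum of the squared Frobenius norm ‖HX‖_F²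
over all invertible H with |det H| = 1 equals 2|det X|. -/
theorem inf_frobenius_det_one (X : Matrix (Fin 2) (Fin 2) ℂ) :
    sInf {r : ℝ | ∃ H : Matrix (Fin 2) (Fin 2) ℂ, IsUnit H ∧ ‖H.det‖ = 1 ∧
        r = ∑ i, ∑ j, ‖(H * X) i j‖ ^ 2}
      = 2 * ‖X.det‖ := by
  set S : Set ℝ := {r : ℝ | ∃ H : Matrix (Fin 2) (Fin 2) ℂ, IsUnit H ∧ ‖H.det‖ = 1 ∧
        r = ∑ i, ∑ j, ‖(H * X) i j‖ ^ 2} with hS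
  set D := ‖X.det‖ with hDdef
  have hD0 : 0 ≤ D := norm_nonneg _
  have hlb : ∀ r ∈ S, 2 * D ≤ r := by
    rintro r ⟨H, hH, hdet, rfl⟩
    have habs : ‖(H * X).det‖ = D := by
      rw [Matrix.det_mul, norm_mul, hdet, one_mul]
    calc 2 * D = 2 * ‖(H * X).det‖ := by rw [habs]
      _ ≤ _ := frob_lb (H * X)
  have hne : S.Nonempty := by
    refine ⟨∑ i, ∑ j, ‖((1 : Matrix (Fin 2) (Fin 2) ℂ) * X) i j‖ ^ 2,
      1, isUnit_one, by simp, rfl⟩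
  have hbdd : BddBelow S := ⟨2 * D, fun r hr => hlb r hr⟩
  refine le_antisymm ?_ (le_csInf hne hlb)
  by_cases hx : X.det = 0
  · -- singular case
    have hD' : D = 0 := by simp [hDdef, hx]
    rw [hD', mul_zero]
    rw [Real.sInf_le_iff hbdd hne]
    intro ε hε
    obtain ⟨α, β, hab, h0, h1⟩ := exists_comb X hx
    set sR : ℝ := ‖α‖ ^ 2 + ‖β‖ ^ 2 with hsR
    have hsRpos : 0 < sR := by
      rcases hab with h | h
      · have := norm_pos_iff.mpr h
        positivity
      · have := norm_pos_iff.mpr h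
        positivity
    set y0 : ℂ := -(starRingEnd ℂ) β * X 0 0 + (starRingEnd ℂ) α * X 1 0 with hy0
    set y1 : ℂ := -(starRingEnd ℂ) β * X 0 1 + (starRingEnd ℂ) α * X 1 1 with hy1
    set C : ℝ := ‖y0‖ ^ 2 + ‖y1‖ ^ 2 with hC
    have hC0 : 0 ≤ C := by positivity
    set t : ℝ := Real.sqrt (ε / (C + 1)) with ht
    have htpos : 0 < t := Real.sqrt_pos.mpr (by positivity)
    have ht2 : t ^ 2 = ε / (C + 1) := Real.sq_sqrt (by positivity)
    set c : ℂ := (t : ℂ) * (sR : ℂ) with hc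
    have hcne : c ≠ 0 := by
      apply mul_ne_zero
      · exact_mod_cast htpos.ne'
      · exact_mod_cast hsRpos.ne'
    set H : Matrix (Fin 2) (Fin 2) ℂ :=
      !![α / c, β / c; -(t : ℂ) * (starRingEnd ℂ) β, (t : ℂ) * (starRingEnd ℂ) α] with hH
    have hdetH : H.det = 1 := by
      rw [hH, Matrix.det_fin_two_of]
      have hz : ∀ z : ℂ, ((‖z‖ : ℝ) : ℂ) ^ 2 = (starRingEnd ℂ) z * z := by
        intro z
        rw [← Complex.ofReal_pow, Complex.sq_norm, mul_comm, Complex.mul_conj]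
      have hsc : (sR : ℂ) = (starRingEnd ℂ) α * α + (starRingEnd ℂ) β * β := by
        rw [hsR]
        push_cast
        rw [← hz, ← hz]
      rw [hc] at hcne ⊢
      have htne : (t : ℂ) ≠ 0 := by exact_mod_cast htpos.ne'
      have hsne : (sR : ℂ) ≠ 0 := by exact_mod_cast hsRpos.ne'
      field_simp
      linear_combination (-1 : ℂ) * hsc
    have hHunit : IsUnit H := by
      rw [Matrix.isUnit_iff_isUnit_det, hdetH]
      exact isUnit_one
    have hE00 : (H * X) 0 0 = 0 := by
      rw [Matrix.mul_apply, Fin.sum_univ_two, hH]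
      simp
      field_simp
      linear_combination h0
    have hE01 : (H * X) 0 1 = 0 := by
      rw [Matrix.mul_apply, Fin.sum_univ_two, hH]
      simp
      field_simp
      linear_combination h1
    have hE10 : (H * X) 1 0 = (t : ℂ) * y0 := by
      rw [Matrix.mul_apply, Fin.sum_univ_two, hH, hy0]
      simp
      ring
    have hE11 : (H * X) 1 1 = (t : ℂ) * y1 := by
      rw [Matrix.mul_apply, Fin.sum_univ_two, hH, hy1]
      simp
      ring
    refine ⟨∑ i, ∑ j, ‖(H * X) i j‖ ^ 2, ⟨H, hHunit, by rw [hdetH]; simp, rfl⟩, ?_⟩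
    rw [Fin.sum_univ_two, Fin.sum_univ_two, Fin.sum_univ_two, hE00, hE01, hE10, hE11]
    have habs : ∀ z : ℂ, ‖(t : ℂ) * z‖ = t * ‖z‖ := by
      intro z
      rw [norm_mul, Complex.norm_real, Real.norm_eq_abs, abs_of_pos htpos]
    rw [habs, habs]
    simp only [norm_zero]
    have : (0:ℝ) ^ 2 + 0 ^ 2 + ((t * ‖y0‖) ^ 2 + (t * ‖y1‖) ^ 2)
        = t ^ 2 * C := by rw [hC]; ring
    rw [this, ht2, zero_add]
    rw [div_mul_eq_mul_div, div_lt_iff₀ (by positivity)]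
    nlinarith
  · -- invertible case
    have hDpos : 0 < D := norm_pos_iff.mpr hx
    set c : ℂ := (Real.sqrt D : ℂ) with hc
    have hc2 : c ^ 2 = (D : ℂ) := by
      rw [hc]
      push_cast [← Complex.ofReal_pow]
      norm_cast
      exact Real.sq_sqrt hD0
    set H : Matrix (Fin 2) (Fin 2) ℂ := c • X⁻¹ with hH
    have hXu : IsUnit X.det := isUnit_iff_ne_zero.mpr hx
    have hdetH : H.det = (D : ℂ) * (X.det)⁻¹ := by
      rw [hH, Matrix.det_smul, Matrix.det_nonsing_inv, Fintype.card_fin, hc2, Ring.inverse_eq_inv]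
    have habsdetH : ‖H.det‖ = 1 := by
      rw [hdetH, norm_mul, norm_inv, Complex.norm_real, Real.norm_eq_abs, abs_of_pos hDpos, ← hDdef]
      field_simp
    have hHunit : IsUnit H := by
      rw [Matrix.isUnit_iff_isUnit_det, hdetH]
      apply isUnit_iff_ne_zero.mpr
      apply mul_ne_zero
      · exact_mod_cast hDpos.ne'
      · exact inv_ne_zero hx
    have hHX : H * X = c • (1 : Matrix (Fin 2) (Fin 2) ℂ) := by
      rw [hH, Matrix.smul_mul, Matrix.nonsing_inv_mul X hXu]
    have hsum : ∑ i, ∑ j, ‖(H * X) i j‖ ^ 2 = 2 * D := by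
      rw [hHX]
      rw [Fin.sum_univ_two, Fin.sum_univ_two, Fin.sum_univ_two]
      simp only [Matrix.smul_apply, Matrix.one_apply, smul_eq_mul]
      norm_num
      have : ‖c‖ = Real.sqrt D := by
        rw [hc, Complex.norm_real, Real.norm_eq_abs, abs_of_nonneg (Real.sqrt_nonneg _)]
      rw [this, Real.sq_sqrt hD0]
      ring
    exact csInf_le hbdd ⟨H, hHunit, habsdetH, hsum.symm⟩
end
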